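/- For every multi-index α with |α| ≥ 1, the partial derivative D^α ϑ(a) of the gluing angle at a point a ≠ 0 is a linear combination of terms a^β/|a|^k with k ≤ 2|α| and |β| ≤ |α|. Consequently, for all α there is a constant C > 0 with |D^α ϑ(a)| ≤ C·|ln R(a)|^{|α|} for small a ≠ 0, where R(a) = e^{1/|a|} - e. -/

import Mathlib

/-- Partial derivative of `f : ℂ → ℝ` in the (real) direction `w`. -/
noncomputable def pdC (w : ℂ) (f : ℂ → ℝ) : ℂ → ℝ := fun a => fderiv ℝ f a w

/-- Iterated partial derivative `D^α = ∂_x^{α₁} ∂_y^{α₂}` for a multi-index `α`. -/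
noncomputable def DmixC (α : ℕ × ℕ) (f : ℂ → ℝ) : ℂ → ℝ :=
  (pdC 1)^[α.1] ((pdC Complex.I)^[α.2] f)

/-- The gluing length `R(a) = e^{1/|a|} - e`. -/
noncomputable def gluingLength (a : ℂ) : ℝ :=
  Real.exp (1 / ‖a‖) - Real.exp 1

/-- The gluing angle: locally (for `re a ≠ 0`, up to constants)
`2π·ϑ(a) = -arctan(im a / re a)`. -/
noncomputable def gluingAngle (a : ℂ) : ℝ :=
  -Real.arctan (a.im / a.re) / (2 * Real.pi)

/-- For every multi-index `α` with `|α| ≥ 1`, the derivative `D^α ϑ(a)` (at points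
`a ≠ 0`, here in the chart `re a ≠ 0`) is a linear combination of terms
`a^β/|a|^k` with `k ≤ 2|α|` and `|β| ≤ |α|`; consequently
`|D^α ϑ(a)| ≤ C·|ln R(a)|^{|α|}` for small `a ≠ 0`. -/
noncomputable def T (c : ℝ) (p q m : ℕ) : ℂ → ℝ :=
  fun a => c * a.re ^ p * a.im ^ q * ((a.re ^ 2 + a.im ^ 2) ^ m)⁻¹

lemma hre (a : ℂ) : HasFDerivAt (fun z : ℂ => z.re) Complex.reCLM a := Complex.reCLM.hasFDerivAt
lemma him (a : ℂ) : HasFDerivAt (fun z : ℂ => z.im) Complex.imCLM a := Complex.imCLM.hasFDerivAt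

lemma hasFDerivAt_T (c : ℝ) (p q m : ℕ) {a : ℂ} (ha : a.re ≠ 0) :
    ∃ L : ℂ →L[ℝ] ℝ, HasFDerivAt (T c p q m) L a ∧ ∀ w : ℂ,
      L w = (T (c * p) (p - 1) q m a + T (-(2 * m * c)) (p + 1) q (m + 1) a) * w.re
      + (T (c * q) p (q - 1) m a + T (-(2 * m * c)) p (q + 1) (m + 1) a) * w.im := by
  have hD0 : (0:ℝ) < a.re ^ 2 + a.im ^ 2 := by positivity
  have hxp := (hasDerivAt_pow p a.re).comp_hasFDerivAt a (hre a)
  have hyq := (hasDerivAt_pow q a.im).comp_hasFDerivAt a (him a)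
  have hD := ((hasDerivAt_pow 2 a.re).comp_hasFDerivAt a (hre a)).add
      ((hasDerivAt_pow 2 a.im).comp_hasFDerivAt a (him a))
  have hDm := (hasDerivAt_pow m _).comp_hasFDerivAt a hD
  have hInv := (hasDerivAt_inv (by positivity : ((a.re^2+a.im^2)^m : ℝ) ≠ 0)).comp_hasFDerivAt a hDm
  have hT := ((hxp.const_mul c).mul hyq).mul hInv
  refine ⟨_, hT, fun w => ?_⟩
  simp only [ContinuousLinearMap.add_apply, ContinuousLinearMap.smul_apply,
    Complex.reCLM_apply, Complex.imCLM_apply, smul_eq_mul, T, Function.comp_apply, Pi.add_apply, Pi.mul_apply]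
  rcases p with _ | p <;> rcases q with _ | q <;> rcases m with _ | m <;>
    · push_cast
      field_simp
      try ring


lemma differentiableAt_T (c : ℝ) (p q m : ℕ) {a : ℂ} (ha : a.re ≠ 0) :
    DifferentiableAt ℝ (T c p q m) a := by
  obtain ⟨L, h, -⟩ := hasFDerivAt_T c p q m ha
  exact h.differentiableAt

lemma pdC_T (c : ℝ) (p q m : ℕ) (w : ℂ) {a : ℂ} (ha : a.re ≠ 0) :
    pdC w (T c p q m) a =
      (T (c * p) (p - 1) q m a + T (-(2 * m * c)) (p + 1) q (m + 1) a) * w.re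
      + (T (c * q) p (q - 1) m a + T (-(2 * m * c)) p (q + 1) (m + 1) a) * w.im := by
  obtain ⟨L, h, hL⟩ := hasFDerivAt_T c p q m ha
  show fderiv ℝ (T c p q m) a w = _
  rw [h.fderiv]
  exact hL w

lemma pdC_gluingAngle (w : ℂ) {a : ℂ} (ha : a.re ≠ 0) :
    pdC w gluingAngle a =
      T (1/(2*Real.pi)) 0 1 1 a * w.re + T (-(1/(2*Real.pi))) 1 0 1 a * w.im := by
  have hπ : Real.pi ≠ 0 := Real.pi_ne_zero
  have hinv := (hasDerivAt_inv ha).comp_hasFDerivAt a (hre a)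
  have hdiv := (him a).mul hinv
  have harc := (Real.hasDerivAt_arctan (a.im * (a.re)⁻¹)).comp_hasFDerivAt a hdiv
  have hG := (harc.neg).const_mul ((2 * Real.pi)⁻¹)
  have hGA : HasFDerivAt (fun z : ℂ => (2 * Real.pi)⁻¹ * -Real.arctan (z.im * z.re⁻¹)) _ a := hG
  have hfun : gluingAngle = fun z : ℂ => (2 * Real.pi)⁻¹ * -Real.arctan (z.im * z.re⁻¹) := by
    funext z; rw [gluingAngle, div_eq_mul_inv z.im]; ring
  rw [pdC, hfun, hGA.fderiv]
  simp only [ContinuousLinearMap.add_apply, ContinuousLinearMap.smul_apply,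
    ContinuousLinearMap.neg_apply,
    Complex.reCLM_apply, Complex.imCLM_apply, smul_eq_mul, T, Function.comp_apply]
  have h1 : (1:ℝ) + (a.im * a.re⁻¹)^2 ≠ 0 := by positivity
  field_simp
  ring

lemma log_gluingLength {a : ℂ} (h0 : a ≠ 0) (hs : ‖a‖ < 1/2) :
    0 < Real.log (gluingLength a) ∧
      1 / (2 * ‖a‖) ≤ Real.log (gluingLength a) := by
  have hr0 : 0 < ‖a‖ := norm_pos_iff.mpr h0
  set r := ‖a‖ with hrdef
  set t := 1 / r with htdef
  have ht2 : 2 < t := by rw [htdef, lt_div_iff₀ hr0]; linarith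
  have hhalf : 1 ≤ t / 2 := by linarith
  have he2 : (2:ℝ) < Real.exp 1 := by
    have := Real.exp_one_gt_d9; linarith
  have h1 : Real.exp 1 ≤ Real.exp (t/2) := by
    rw [Real.exp_le_exp]; linarith
  have hexpt : Real.exp t = Real.exp (t/2) * Real.exp (t/2) := by
    rw [← Real.exp_add]; ring_nf
  have hE : Real.exp (t/2) ≤ gluingLength a := by
    rw [gluingLength, ← hrdef, ← htdef, hexpt]
    nlinarith [Real.exp_pos (t/2)]
  have hpos : 0 < gluingLength a := lt_of_lt_of_le (Real.exp_pos _) hE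
  have hlog : t/2 ≤ Real.log (gluingLength a) := by
    rw [Real.le_log_iff_exp_le hpos]; exact hE
  have heq : 1 / (2 * r) = t / 2 := by
    rw [htdef]; field_simp
  constructor
  · linarith
  · rw [heq]; exact hlog

/-- representation predicate -/
def IsRep (M : ℕ) (f : ℂ → ℝ) : Prop :=
  ∃ (n : ℕ) (c : Fin n → ℝ) (p q m : Fin n → ℕ),
    (∀ j, p j + q j ≤ M ∧ m j ≤ M ∧ 2 * m j ≤ p j + q j + M) ∧
    ∀ a : ℂ, a.re ≠ 0 → f a = ∑ j, T (c j) (p j) (q j) (m j) a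

lemma fderiv_congr_ne {f g : ℂ → ℝ} (h : ∀ b : ℂ, b.re ≠ 0 → f b = g b) {a : ℂ}
    (ha : a.re ≠ 0) : fderiv ℝ f a = fderiv ℝ g a := by
  have hopen : IsOpen {z : ℂ | z.re ≠ 0} := IsOpen.preimage Complex.continuous_re isOpen_ne
  exact Filter.EventuallyEq.fderiv_eq (Filter.eventuallyEq_of_mem (hopen.mem_nhds ha) h)

lemma pdC_sum {n : ℕ} {c : Fin n → ℝ} {p q m : Fin n → ℕ} {f : ℂ → ℝ} (w : ℂ)
    (hsum : ∀ a : ℂ, a.re ≠ 0 → f a = ∑ j, T (c j) (p j) (q j) (m j) a)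
    {a : ℂ} (ha : a.re ≠ 0) :
    pdC w f a = ∑ j : Fin n, pdC w (T (c j) (p j) (q j) (m j)) a := by
  have hcongr : fderiv ℝ f a = fderiv ℝ (fun b => ∑ j, T (c j) (p j) (q j) (m j) b) a :=
    fderiv_congr_ne hsum ha
  have hdiff : ∀ j : Fin n, j ∈ Finset.univ →
      DifferentiableAt ℝ (T (c j) (p j) (q j) (m j)) a :=
    fun j _ => differentiableAt_T _ _ _ _ ha
  rw [pdC, hcongr, fderiv_fun_sum hdiff]
  simp [pdC, ContinuousLinearMap.sum_apply]

lemma IsRep.pd1 {M : ℕ} {f : ℂ → ℝ} (hf : IsRep M f) : IsRep (M + 1) (pdC 1 f) := by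
  obtain ⟨n, c, p, q, m, hb, hsum⟩ := hf
  refine ⟨n + n,
    Fin.append (fun j => c j * p j) (fun j => -(2 * m j * c j)),
    Fin.append (fun j => p j - 1) (fun j => p j + 1),
    Fin.append q q,
    Fin.append m (fun j => m j + 1), ?_, ?_⟩
  · intro j
    refine Fin.addCases (fun i => ?_) (fun i => ?_) j <;>
      · simp only [Fin.append_left, Fin.append_right]
        have := hb i
        omega
  · intro a ha
    rw [pdC_sum 1 hsum ha, Fin.sum_univ_add]
    simp only [Fin.append_left, Fin.append_right]
    rw [← Finset.sum_add_distrib]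
    refine Finset.sum_congr rfl fun j _ => ?_
    rw [pdC_T _ _ _ _ _ ha]
    simp [Complex.one_re, Complex.one_im]

lemma IsRep.pdI {M : ℕ} {f : ℂ → ℝ} (hf : IsRep M f) : IsRep (M + 1) (pdC Complex.I f) := by
  obtain ⟨n, c, p, q, m, hb, hsum⟩ := hf
  refine ⟨n + n,
    Fin.append (fun j => c j * q j) (fun j => -(2 * m j * c j)),
    Fin.append p p,
    Fin.append (fun j => q j - 1) (fun j => q j + 1),
    Fin.append m (fun j => m j + 1), ?_, ?_⟩
  · intro j
    refine Fin.addCases (fun i => ?_) (fun i => ?_) j <;>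
      · simp only [Fin.append_left, Fin.append_right]
        have := hb i
        omega
  · intro a ha
    rw [pdC_sum Complex.I hsum ha, Fin.sum_univ_add]
    simp only [Fin.append_left, Fin.append_right]
    rw [← Finset.sum_add_distrib]
    refine Finset.sum_congr rfl fun j _ => ?_
    rw [pdC_T _ _ _ _ _ ha]
    simp [Complex.I_re, Complex.I_im]

lemma IsRep.pd {M : ℕ} {f : ℂ → ℝ} (hf : IsRep M f) {w : ℂ}
    (hw : w = 1 ∨ w = Complex.I) : IsRep (M + 1) (pdC w f) := by
  rcases hw with hw | hw <;> subst hw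
  · exact hf.pd1
  · exact hf.pdI

lemma IsRep.iter {M : ℕ} {f : ℂ → ℝ} (hf : IsRep M f) {w : ℂ}
    (hw : w = 1 ∨ w = Complex.I) (t : ℕ) : IsRep (M + t) ((pdC w)^[t] f) := by
  induction t with
  | zero => simpa using hf
  | succ t ih =>
    rw [Function.iterate_succ_apply']
    exact ih.pd hw

lemma isRep_base {w : ℂ} (hw : w = 1 ∨ w = Complex.I) : IsRep 1 (pdC w gluingAngle) := by
  rcases hw with hw | hw <;> subst hw
  · exact ⟨1, fun _ => 1/(2*Real.pi), fun _ => 0, fun _ => 1, fun _ => 1,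
      fun j => ⟨by norm_num, by norm_num, by norm_num⟩, fun a ha => by
        rw [pdC_gluingAngle _ ha]
        simp [Complex.one_re, Complex.one_im]⟩
  · exact ⟨1, fun _ => -(1/(2*Real.pi)), fun _ => 1, fun _ => 0, fun _ => 1,
      fun j => ⟨by norm_num, by norm_num, by norm_num⟩, fun a ha => by
        rw [pdC_gluingAngle _ ha]
        simp [Complex.I_re, Complex.I_im]⟩

lemma isRep_DmixC (α : ℕ × ℕ) (hα : 1 ≤ α.1 + α.2) :
    IsRep (α.1 + α.2) (DmixC α gluingAngle) := by
  rw [DmixC]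
  rcases hn : α.2 with _ | s
  · simp only [Function.iterate_zero_apply]
    obtain ⟨u, hu⟩ : ∃ u, α.1 = u + 1 := ⟨α.1 - 1, by omega⟩
    rw [hu, Function.iterate_succ_apply]
    have h1 := (isRep_base (Or.inl rfl)).iter (Or.inl rfl) u
    have he : u + 1 + 0 = 1 + u := by omega
    rw [he]
    exact h1
  · rw [Function.iterate_succ_apply]
    have hin := (isRep_base (Or.inr rfl)).iter (Or.inr rfl) s
    have hout := hin.iter (w := 1) (Or.inl rfl) α.1
    have he : α.1 + (s + 1) = 1 + s + α.1 := by omega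
    rw [he]
    exact hout

lemma sq_abs' (a : ℂ) : ‖a‖ ^ 2 = a.re ^ 2 + a.im ^ 2 := by
  rw [Complex.sq_norm, Complex.normSq_apply]; ring

theorem stmt3 (α : ℕ × ℕ) (hα : 1 ≤ α.1 + α.2) :
    (∃ (n : ℕ) (c : Fin n → ℝ) (k : Fin n → ℕ) (β : Fin n → ℕ × ℕ),
      (∀ j, k j ≤ 2 * (α.1 + α.2) ∧ (β j).1 + (β j).2 ≤ α.1 + α.2) ∧
      ∀ a : ℂ, a.re ≠ 0 →
        DmixC α gluingAngle a =
          ∑ j : Fin n, c j * a.re ^ (β j).1 * a.im ^ (β j).2 / ‖a‖ ^ k j) ∧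
    ∃ C > (0 : ℝ), ∀ a : ℂ, a ≠ 0 → ‖a‖ < 1 / 2 → a.re ≠ 0 →
      |DmixC α gluingAngle a| ≤ C * |Real.log (gluingLength a)| ^ (α.1 + α.2) := by
  obtain ⟨n, c, p, q, m, hb, hsum⟩ := isRep_DmixC α hα
  set M := α.1 + α.2 with hM
  have habsT : ∀ (j : Fin n) (a : ℂ), a ≠ 0 →
      T (c j) (p j) (q j) (m j) a
        = c j * a.re ^ p j * a.im ^ q j / ‖a‖ ^ (2 * m j) := by
    intro j a h0
    rw [T, pow_mul, sq_abs', div_eq_mul_inv]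
  constructor
  · refine ⟨n, c, fun j => 2 * m j, fun j => (p j, q j), fun j => ⟨?_, ?_⟩, fun a ha => ?_⟩
    · show 2 * m j ≤ 2 * M
      have := (hb j).2.1; omega
    · show p j + q j ≤ M
      exact (hb j).1
    · show DmixC α gluingAngle a = ∑ j : Fin n, c j * a.re ^ p j * a.im ^ q j / ‖a‖ ^ (2 * m j)
      rw [hsum a ha]
      refine Finset.sum_congr rfl fun j _ => ?_
      exact habsT j a (fun h => ha (by simp [h]))
  · refine ⟨(∑ j : Fin n, |c j|) * 2 ^ M + 1, by positivity, fun a h0 hs ha => ?_⟩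
    set r := ‖a‖ with hr
    have hr0 : 0 < r := norm_pos_iff.mpr h0
    obtain ⟨hlog0, hlog⟩ := log_gluingLength h0 hs
    set L := Real.log (gluingLength a) with hL
    have hinvr : 1 / r ≤ 2 * L := by
      have h2r : 1 / r = 2 * (1 / (2 * r)) := by field_simp
      linarith
    have hz : r ^ M * ((1 / r) ^ M) = 1 := by
      rw [one_div, inv_pow, mul_inv_cancel₀ (by positivity)]
    have hzle : ∀ j : Fin n, r ^ (p j + q j) * (r ^ (2 * m j))⁻¹ ≤ (1 / r) ^ M := by
      intro j
      have h1 : r ^ (p j + q j) * (r ^ (2 * m j))⁻¹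
          = r ^ (((p j + q j : ℕ) : ℤ) - ((2 * m j : ℕ) : ℤ)) := by
        rw [zpow_sub₀ (ne_of_gt hr0), zpow_natCast, zpow_natCast, div_eq_mul_inv]
      have h2 : r ^ (((p j + q j : ℕ) : ℤ) - ((2 * m j : ℕ) : ℤ)) ≤ r ^ (-(M : ℤ)) := by
        apply zpow_le_zpow_right_of_le_one₀ hr0 (by linarith : r ≤ 1)
        have := (hb j).2.2
        omega
      have h3 : r ^ (-(M : ℤ)) = (1 / r) ^ M := by
        rw [zpow_neg, zpow_natCast, one_div, inv_pow]
      rw [h1, ← h3]; exact h2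
    have hTb : ∀ j : Fin n, |T (c j) (p j) (q j) (m j) a| ≤ |c j| * (1 / r) ^ M := by
      intro j
      have hden : ((a.re ^ 2 + a.im ^ 2) ^ m j : ℝ) = r ^ (2 * m j) := by
        rw [pow_mul, sq_abs']
      have hxr : |a.re| ≤ r := Complex.abs_re_le_norm a
      have hyr : |a.im| ≤ r := Complex.abs_im_le_norm a
      have hrpos : (0:ℝ) < r ^ (2 * m j) := by positivity
      simp only [T, hden]
      rw [abs_mul, abs_mul, abs_mul, abs_pow, abs_pow, abs_inv, abs_of_pos hrpos]
      calc |c j| * |a.re| ^ p j * |a.im| ^ q j * (r ^ (2 * m j))⁻¹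
          ≤ |c j| * r ^ p j * r ^ q j * (r ^ (2 * m j))⁻¹ := by
            gcongr <;> first | exact hxr | exact hyr
        _ = |c j| * (r ^ (p j + q j) * (r ^ (2 * m j))⁻¹) := by rw [pow_add]; ring
        _ ≤ |c j| * (1 / r) ^ M := by
            exact mul_le_mul_of_nonneg_left (hzle j) (abs_nonneg _)
    have hLpow : (0:ℝ) ≤ L ^ M := by positivity
    calc |DmixC α gluingAngle a|
        = |∑ j : Fin n, T (c j) (p j) (q j) (m j) a| := by rw [hsum a ha]
      _ ≤ ∑ j : Fin n, |T (c j) (p j) (q j) (m j) a| := Finset.abs_sum_le_sum_abs _ _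
      _ ≤ ∑ j : Fin n, |c j| * (1 / r) ^ M := Finset.sum_le_sum fun j _ => hTb j
      _ = (∑ j : Fin n, |c j|) * (1 / r) ^ M := by rw [Finset.sum_mul]
      _ ≤ (∑ j : Fin n, |c j|) * (2 * L) ^ M := by
          exact mul_le_mul_of_nonneg_left
            (pow_le_pow_left₀ (by positivity) hinvr M)
            (Finset.sum_nonneg fun j _ => abs_nonneg _)
      _ = (∑ j : Fin n, |c j|) * 2 ^ M * L ^ M := by rw [mul_pow]; ring
      _ ≤ ((∑ j : Fin n, |c j|) * 2 ^ M + 1) * |L| ^ M := by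
          rw [abs_of_pos hlog0]
          nlinarith [hLpow]
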